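/- There is a polynomial p such that for every simple directed graph G with n > 0 vertices: G has no Hamiltonian path if and only if there exists a normal tree-like proof of α_G → ⊥ in the intuitionistic natural deduction calculus NJ whose height is at most p(n). -/

import Mathlib

/-- Propositional formulas over variables `ν`, with `⊥`, `∧`, `∨`, `→`. -/
inductive PF (ν : Type) : Type
  | bot
  | var (x : ν)
  | and (a b : PF ν)
  | or (a b : PF ν)
  | imp (a b : PF ν)
deriving DecidableEq

namespace PF

/-- `¬γ` abbreviates `γ → ⊥`. -/
def neg {ν : Type} (a : PF ν) : PF ν := .imp a .bot

/-- Classical (Boolean) evaluation, with `⊥` interpreted as false. -/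
def evalB {ν : Type} (w : ν → Bool) : PF ν → Bool
  | .bot => false
  | .var x => w x
  | .and a b => a.evalB w && b.evalB w
  | .or a b => a.evalB w || b.evalB w
  | .imp a b => !(a.evalB w) || b.evalB w

end PF

/-- Classical satisfiability. -/
def PFSatisfiable {ν : Type} (a : PF ν) : Prop := ∃ w : ν → Bool, a.evalB w = true

/-- Classical tautologyhood. -/
def PFTautology {ν : Type} (a : PF ν) : Prop := ∀ w : ν → Bool, a.evalB w = true

/-- Conjunction of a list of formulas (the empty conjunction is the truth `⊥ → ⊥`). -/
def conjList {ν : Type} : List (PF ν) → PF ν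
  | [] => .imp .bot .bot
  | [a] => a
  | a :: b :: as => .and a (conjList (b :: as))

/-- Disjunction of a list of formulas (the empty disjunction is `⊥`). -/
def disjList {ν : Type} : List (PF ν) → PF ν
  | [] => .bot
  | [a] => a
  | a :: b :: as => .or a (disjList (b :: as))

/-- The propositional variable `X_{i,v}` : vertex `v` is visited at step `i`. -/
def X {n : ℕ} (i v : Fin n) : PF (Fin n × Fin n) := .var (i, v)

/-- `A` : every vertex is visited. -/
def formA (n : ℕ) : PF (Fin n × Fin n) :=
  conjList ((List.finRange n).map fun v =>
    disjList ((List.finRange n).map fun i => X i v))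

/-- `B` : there are no repetitions. -/
def formB (n : ℕ) : PF (Fin n × Fin n) :=
  conjList ((List.finRange n).map fun v =>
    conjList ((List.finRange n).map fun i =>
      conjList (((List.finRange n).filter fun j => j ≠ i).map fun j =>
        .imp (X i v) (.imp (X j v) .bot))))

/-- `C` : at each step at least one vertex is visited. -/
def formC (n : ℕ) : PF (Fin n × Fin n) :=
  conjList ((List.finRange n).map fun i =>
    disjList ((List.finRange n).map fun v => X i v))

/-- `D` : at each step at most one vertex is visited. -/
def formD (n : ℕ) : PF (Fin n × Fin n) :=
  conjList ((List.finRange n).map fun v =>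
    conjList (((List.finRange n).filter fun w => w ≠ v).map fun w =>
      conjList ((List.finRange n).map fun i =>
        .imp (X i v) (.imp (X i w) .bot))))

/-- `E` : if there is no edge from `v` to `w` then `w` is not visited immediately
after `v`. -/
def formE (n : ℕ) (adj : Fin n → Fin n → Bool) : PF (Fin n × Fin n) :=
  conjList ((List.finRange n).map fun v =>
    conjList (((List.finRange n).filter fun w => ¬ adj v w).map fun w =>
      conjList ((List.finRange (n - 1)).map fun i =>
        .imp (X ⟨i.val, by have := i.isLt; omega⟩ v)
          (.imp (X ⟨i.val + 1, by have := i.isLt; omega⟩ w) .bot))))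

/-- The formula `α_G = A ∧ B ∧ C ∧ D ∧ E` associated with the simple directed graph
`G` on `Fin n` with adjacency `adj`. -/
def alphaG (n : ℕ) (adj : Fin n → Fin n → Bool) : PF (Fin n × Fin n) :=
  .and (formA n) (.and (formB n) (.and (formC n) (.and (formD n) (formE n adj))))

/-- `G` has a Hamiltonian path: a sequence `v₁ … v_n` of vertices such that
`i ↦ vᵢ` is a bijection onto the vertex set and consecutive vertices are adjacent. -/
def HamPath (n : ℕ) (adj : Fin n → Fin n → Bool) : Prop :=
  ∃ v : Fin n → Fin n, Function.Bijective v ∧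
    ∀ (i : ℕ) (h : i + 1 < n), adj (v ⟨i, by omega⟩) (v ⟨i + 1, h⟩) = true

/-- Tree-like natural deductions in Prawitz's intuitionistic calculus NJ.  Each
constructor records the inference of which its root is the conclusion. -/
inductive NJT (ν : Type) : Type
  | leaf (φ : PF ν)
  | botE (φ : PF ν) (t : NJT ν)
  | andI (t₁ t₂ : NJT ν)
  | andE1 (a b : PF ν) (t : NJT ν)
  | andE2 (a b : PF ν) (t : NJT ν)
  | orI1 (b : PF ν) (t : NJT ν)
  | orI2 (a : PF ν) (t : NJT ν)
  | orE (a b : PF ν) (t t₁ t₂ : NJT ν)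
  | impI (a : PF ν) (t : NJT ν)
  | impE (a b : PF ν) (t₁ t₂ : NJT ν)

namespace NJT

variable {ν : Type}

/-- The formula labelling the root. -/
def lab : NJT ν → PF ν
  | leaf φ => φ
  | botE φ _ => φ
  | andI t₁ t₂ => .and t₁.lab t₂.lab
  | andE1 a _ _ => a
  | andE2 _ b _ => b
  | orI1 b t => .or t.lab b
  | orI2 a t => .or a t.lab
  | orE _ _ _ t₁ _ => t₁.lab
  | impI a t => .imp a t.lab
  | impE _ b _ _ => b

/-- Local correctness w.r.t. the NJ rules. -/
inductive Correct : NJT ν → Prop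
  | leaf (φ : PF ν) : Correct (leaf φ)
  | botE {φ : PF ν} {t : NJT ν} : t.lab = .bot → Correct t → Correct (botE φ t)
  | andI {t₁ t₂ : NJT ν} : Correct t₁ → Correct t₂ → Correct (andI t₁ t₂)
  | andE1 {a b : PF ν} {t : NJT ν} : t.lab = .and a b → Correct t → Correct (andE1 a b t)
  | andE2 {a b : PF ν} {t : NJT ν} : t.lab = .and a b → Correct t → Correct (andE2 a b t)
  | orI1 {b : PF ν} {t : NJT ν} : Correct t → Correct (orI1 b t)
  | orI2 {a : PF ν} {t : NJT ν} : Correct t → Correct (orI2 a t)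
  | orE {a b : PF ν} {t t₁ t₂ : NJT ν} : t.lab = .or a b → t₂.lab = t₁.lab →
      Correct t → Correct t₁ → Correct t₂ → Correct (orE a b t t₁ t₂)
  | impI {a : PF ν} {t : NJT ν} : Correct t → Correct (impI a t)
  | impE {a b : PF ν} {t₁ t₂ : NJT ν} : t₁.lab = a → t₂.lab = .imp a b →
      Correct t₁ → Correct t₂ → Correct (impE a b t₁ t₂)

/-- `ClosedUnder D t` : every assumption of `t` is discharged in `t` or belongs to
`D` (the formulas discharged below `t`); with `D = ∅` : all assumptions discharged. -/
inductive ClosedUnder : Set (PF ν) → NJT ν → Prop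
  | leaf {D : Set (PF ν)} {φ : PF ν} : φ ∈ D → ClosedUnder D (leaf φ)
  | botE {D : Set (PF ν)} {φ : PF ν} {t : NJT ν} :
      ClosedUnder D t → ClosedUnder D (botE φ t)
  | andI {D : Set (PF ν)} {t₁ t₂ : NJT ν} :
      ClosedUnder D t₁ → ClosedUnder D t₂ → ClosedUnder D (andI t₁ t₂)
  | andE1 {D : Set (PF ν)} {a b : PF ν} {t : NJT ν} :
      ClosedUnder D t → ClosedUnder D (andE1 a b t)
  | andE2 {D : Set (PF ν)} {a b : PF ν} {t : NJT ν} :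
      ClosedUnder D t → ClosedUnder D (andE2 a b t)
  | orI1 {D : Set (PF ν)} {b : PF ν} {t : NJT ν} :
      ClosedUnder D t → ClosedUnder D (orI1 b t)
  | orI2 {D : Set (PF ν)} {a : PF ν} {t : NJT ν} :
      ClosedUnder D t → ClosedUnder D (orI2 a t)
  | orE {D : Set (PF ν)} {a b : PF ν} {t t₁ t₂ : NJT ν} :
      ClosedUnder D t → ClosedUnder (insert a D) t₁ → ClosedUnder (insert b D) t₂ →
      ClosedUnder D (orE a b t t₁ t₂)
  | impI {D : Set (PF ν)} {a : PF ν} {t : NJT ν} :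
      ClosedUnder (insert a D) t → ClosedUnder D (impI a t)
  | impE {D : Set (PF ν)} {a b : PF ν} {t₁ t₂ : NJT ν} :
      ClosedUnder D t₁ → ClosedUnder D t₂ → ClosedUnder D (impE a b t₁ t₂)

/-- `t` concludes with an introduction rule. -/
def isIntro : NJT ν → Prop
  | andI _ _ => True
  | orI1 _ _ => True
  | orI2 _ _ => True
  | impI _ _ => True
  | _ => False

/-- Normality: no node is both the conclusion of an introduction rule and the major
premise of an elimination rule. -/
inductive Normal : NJT ν → Prop
  | leaf (φ : PF ν) : Normal (leaf φ)
  | botE {φ : PF ν} {t : NJT ν} : Normal t → ¬ t.isIntro → Normal (botE φ t)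
  | andI {t₁ t₂ : NJT ν} : Normal t₁ → Normal t₂ → Normal (andI t₁ t₂)
  | andE1 {a b : PF ν} {t : NJT ν} : Normal t → ¬ t.isIntro → Normal (andE1 a b t)
  | andE2 {a b : PF ν} {t : NJT ν} : Normal t → ¬ t.isIntro → Normal (andE2 a b t)
  | orI1 {b : PF ν} {t : NJT ν} : Normal t → Normal (orI1 b t)
  | orI2 {a : PF ν} {t : NJT ν} : Normal t → Normal (orI2 a t)
  | orE {a b : PF ν} {t t₁ t₂ : NJT ν} : Normal t → ¬ t.isIntro →
      Normal t₁ → Normal t₂ → Normal (orE a b t t₁ t₂)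
  | impI {a : PF ν} {t : NJT ν} : Normal t → Normal (impI a t)
  | impE {a b : PF ν} {t₁ t₂ : NJT ν} : Normal t₁ → Normal t₂ → ¬ t₂.isIntro →
      Normal (impE a b t₁ t₂)

/-- The height of an NJ deduction tree (length of its longest branch). -/
def height : NJT ν → ℕ
  | leaf _ => 0
  | botE _ t => t.height + 1
  | andI t₁ t₂ => max t₁.height t₂.height + 1
  | andE1 _ _ t => t.height + 1
  | andE2 _ _ t => t.height + 1
  | orI1 _ t => t.height + 1
  | orI2 _ t => t.height + 1
  | orE _ _ t t₁ t₂ => max t.height (max t₁.height t₂.height) + 1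
  | impI _ t => t.height + 1
  | impE _ _ t₁ t₂ => max t₁.height t₂.height + 1

end NJT
namespace HamNJ

open PF NJT

variable {ν : Type}

/-- Existence of a correct, normal derivation of `φ` with open assumptions in `Γ`,
not ending with an introduction, of height `≤ h`. -/
def EDeriv (Γ : Set (PF ν)) (φ : PF ν) (h : ℕ) : Prop :=
  ∃ t : NJT ν, t.Correct ∧ t.Normal ∧ t.ClosedUnder Γ ∧ ¬ t.isIntro ∧
    t.lab = φ ∧ t.height ≤ h

lemma EDeriv.mono {Γ : Set (PF ν)} {φ : PF ν} {h h' : ℕ}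
    (hd : EDeriv Γ φ h) (hh : h ≤ h') : EDeriv Γ φ h' := by
  obtain ⟨t, h1, h2, h3, h4, h5, h6⟩ := hd
  exact ⟨t, h1, h2, h3, h4, h5, h6.trans hh⟩

lemma EDeriv.assum {Γ : Set (PF ν)} {φ : PF ν} (hφ : φ ∈ Γ) : EDeriv Γ φ 0 :=
  ⟨.leaf φ, .leaf φ, .leaf φ, .leaf hφ, fun h => h.elim, rfl, le_refl 0⟩

lemma EDeriv.andE1 {Γ : Set (PF ν)} {a b : PF ν} {h : ℕ}
    (hd : EDeriv Γ (.and a b) h) : EDeriv Γ a (h + 1) := by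
  obtain ⟨t, h1, h2, h3, h4, h5, h6⟩ := hd
  exact ⟨.andE1 a b t, .andE1 h5 h1, .andE1 h2 h4, .andE1 h3, fun h => h.elim, rfl,
    by simpa [NJT.height] using h6⟩

lemma EDeriv.andE2 {Γ : Set (PF ν)} {a b : PF ν} {h : ℕ}
    (hd : EDeriv Γ (.and a b) h) : EDeriv Γ b (h + 1) := by
  obtain ⟨t, h1, h2, h3, h4, h5, h6⟩ := hd
  exact ⟨.andE2 a b t, .andE2 h5 h1, .andE2 h2 h4, .andE2 h3, fun h => h.elim, rfl,
    by simpa [NJT.height] using h6⟩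

lemma EDeriv.impE {Γ : Set (PF ν)} {a b : PF ν} {h₁ h₂ : ℕ}
    (hmin : EDeriv Γ a h₁) (hmaj : EDeriv Γ (.imp a b) h₂) :
    EDeriv Γ b (max h₁ h₂ + 1) := by
  obtain ⟨t1, a1, a2, a3, a4, a5, a6⟩ := hmin
  obtain ⟨t2, b1, b2, b3, b4, b5, b6⟩ := hmaj
  exact ⟨.impE a b t1 t2, .impE a5 b5 a1 b1, .impE a2 b2 b4, .impE a3 b3,
    fun h => h.elim, rfl, by simp [NJT.height]; omega⟩

lemma EDeriv.orE {Γ : Set (PF ν)} {a b c : PF ν} {h h₁ h₂ : ℕ}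
    (hmaj : EDeriv Γ (.or a b) h)
    (hl : EDeriv (insert a Γ) c h₁) (hr : EDeriv (insert b Γ) c h₂) :
    EDeriv Γ c (max h (max h₁ h₂) + 1) := by
  obtain ⟨t, a1, a2, a3, a4, a5, a6⟩ := hmaj
  obtain ⟨t1, b1, b2, b3, b4, b5, b6⟩ := hl
  obtain ⟨t2, c1, c2, c3, c4, c5, c6⟩ := hr
  refine ⟨.orE a b t t1 t2, .orE a5 (c5.trans b5.symm) a1 b1 c1,
    .orE a2 a4 b2 c2, .orE a3 b3 c3, fun h => h.elim, b5, ?_⟩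
  simp [NJT.height]; omega

/-- Extracting a conjunct from a list conjunction. -/
lemma conjExtract {Γ : Set (PF ν)} :
    ∀ (L : List (PF ν)) {φ : PF ν} {h : ℕ}, φ ∈ L → EDeriv Γ (conjList L) h →
      EDeriv Γ φ (h + L.length)
  | [], _, _, hm, _ => absurd hm (List.not_mem_nil)
  | [a], φ, h, hm, hd => by
      simp at hm; subst hm
      exact hd.mono (by simp)
  | a :: b :: as, φ, h, hm, hd => by
      rcases List.mem_cons.1 hm with rfl | hm
      · exact (EDeriv.andE1 (a := φ) (b := conjList (b :: as)) hd).mono (by simp)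
      · have : EDeriv Γ (conjList (b :: as)) (h + 1) :=
          EDeriv.andE2 (a := a) (b := conjList (b :: as)) hd
        exact (conjExtract (b :: as) hm this).mono (by simp; omega)

/-- Case analysis over a list disjunction which is itself an assumption. -/
lemma cascadeMem {H : ℕ} :
    ∀ (L : List (PF ν)) (Γ : Set (PF ν)), disjList L ∈ Γ →
      (∀ x ∈ L, ∀ Γ' : Set (PF ν), Γ ⊆ Γ' → x ∈ Γ' → EDeriv Γ' PF.bot H) →
      EDeriv Γ PF.bot (H + L.length + 1)
  | [], Γ, hm, _ => (EDeriv.assum hm).mono (by omega)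
  | [a], Γ, hm, hc => (hc a (by simp) Γ subset_rfl hm).mono (by omega)
  | a :: b :: as, Γ, hm, hc => by
      have maj : EDeriv Γ (.or a (disjList (b :: as))) 0 := EDeriv.assum hm
      have left : EDeriv (insert a Γ) PF.bot H :=
        hc a (by simp) _ (Set.subset_insert _ _) (Set.mem_insert _ _)
      have right : EDeriv (insert (disjList (b :: as)) Γ) PF.bot (H + (b :: as).length + 1) :=
        cascadeMem (b :: as) _ (Set.mem_insert _ _)
          (fun x hx Γ' hΓ hxΓ =>
            hc x (by simp [hx]) Γ' ((Set.subset_insert _ _).trans hΓ) hxΓ)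
      exact (EDeriv.orE maj left right).mono (by simp)

/-- Case analysis over a derived list disjunction with at least two disjuncts. -/
lemma cascadeTop {Γ : Set (PF ν)} {h H : ℕ} :
    ∀ (L : List (PF ν)), 2 ≤ L.length → EDeriv Γ (disjList L) h →
      (∀ x ∈ L, ∀ Γ' : Set (PF ν), Γ ⊆ Γ' → x ∈ Γ' → EDeriv Γ' PF.bot H) →
      EDeriv Γ PF.bot (max h (H + L.length) + 1)
  | [], h2, _, _ => by simp at h2
  | [a], h2, _, _ => by simp at h2
  | a :: b :: as, _, maj, hc => by
      have left : EDeriv (insert a Γ) PF.bot H :=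
        hc a (by simp) _ (Set.subset_insert _ _) (Set.mem_insert _ _)
      have right : EDeriv (insert (disjList (b :: as)) Γ) PF.bot (H + (b :: as).length + 1) :=
        cascadeMem (b :: as) _ (Set.mem_insert _ _)
          (fun x hx Γ' hΓ hxΓ =>
            hc x (by simp [hx]) Γ' ((Set.subset_insert _ _).trans hΓ) hxΓ)
      exact (EDeriv.orE (a := a) (b := disjList (b :: as)) maj left right).mono
        (by simp; omega)



lemma evalB_conjList {ν : Type} (w : ν → Bool) :
    ∀ L : List (PF ν), (conjList L).evalB w = L.all (fun a => a.evalB w)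
  | [] => by simp [conjList, PF.evalB]
  | [a] => by simp [conjList]
  | a :: b :: as => by
      have ih := evalB_conjList w (b :: as)
      simp only [conjList, PF.evalB, ih, List.all_cons]

lemma evalB_disjList {ν : Type} (w : ν → Bool) :
    ∀ L : List (PF ν), (disjList L).evalB w = L.any (fun a => a.evalB w)
  | [] => by simp [disjList, PF.evalB]
  | [a] => by simp [disjList]
  | a :: b :: as => by
      have ih := evalB_disjList w (b :: as)
      simp only [disjList, PF.evalB, ih, List.any_cons]

/-- A Hamiltonian path gives a satisfying valuation of `α_G`. -/
lemma sat_of_hamPath {n : ℕ} {adj : Fin n → Fin n → Bool} (h : HamPath n adj) :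
    ∃ w : Fin n × Fin n → Bool, (alphaG n adj).evalB w = true := by
  obtain ⟨v, hbij, hedge⟩ := h
  refine ⟨fun p => decide (v p.1 = p.2), ?_⟩
  simp only [alphaG, PF.evalB, Bool.and_eq_true]
  refine ⟨?_, ?_, ?_, ?_, ?_⟩
  · simp [formA, evalB_conjList, evalB_disjList, X, PF.evalB]
    exact hbij.2
  · simp [formB, evalB_conjList, evalB_disjList, X, PF.evalB]
    intro u i j
    refine or_iff_not_imp_left.2 fun hji => ?_
    rcases eq_or_ne (v i) u with rfl | hne
    · exact Or.inr (fun hj => hji (hbij.1 hj))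
    · exact Or.inl hne
  · simp [formC, evalB_conjList, evalB_disjList, X, PF.evalB]
  · simp [formD, evalB_conjList, evalB_disjList, X, PF.evalB]
    intro u u'
    refine or_iff_not_imp_left.2 fun hne i => ?_
    rcases eq_or_ne (v i) u with rfl | h1
    · exact Or.inr (fun h2 => hne (h2.symm))
    · exact Or.inl h1
  · simp [formE, evalB_conjList, evalB_disjList, X, PF.evalB]
    intro u u'
    refine or_iff_not_imp_left.2 fun hadj i => ?_
    by_contra hcon
    push_neg at hcon
    obtain ⟨h1, h2⟩ := hcon
    have hlt : (i : ℕ) + 1 < n := by have := i.isLt; omega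
    have := hedge i hlt
    rw [h1, h2] at this
    rw [this] at hadj
    simp at hadj
/-- Soundness of NJ w.r.t. Boolean valuations. -/
lemma sound {ν : Type} {w : ν → Bool} :
    ∀ {t : NJT ν} {D : Set (PF ν)}, t.ClosedUnder D → t.Correct →
      (∀ φ ∈ D, φ.evalB w = true) → t.lab.evalB w = true := by
  intro t D hcl
  induction hcl with
  | leaf hm => intro _ hw; exact hw _ hm
  | botE hct ih =>
      intro hc hw
      cases hc with
      | botE hl hc' =>
          have := ih hc' hw
          rw [hl] at this
          simp [PF.evalB] at this
  | andI h1 h2 ih1 ih2 =>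
      intro hc hw
      cases hc with
      | andI c1 c2 => simp [NJT.lab, PF.evalB, ih1 c1 hw, ih2 c2 hw]
  | andE1 hct ih =>
      intro hc hw
      cases hc with
      | andE1 hl c =>
          have := ih c hw
          rw [hl] at this
          simp [PF.evalB, NJT.lab] at this ⊢
          exact this.1
  | andE2 hct ih =>
      intro hc hw
      cases hc with
      | andE2 hl c =>
          have := ih c hw
          rw [hl] at this
          simp [PF.evalB, NJT.lab] at this ⊢
          exact this.2
  | orI1 hct ih =>
      intro hc hw
      cases hc with
      | orI1 c => simp [NJT.lab, PF.evalB, ih c hw]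
  | orI2 hct ih =>
      intro hc hw
      cases hc with
      | orI2 c => simp [NJT.lab, PF.evalB, ih c hw]
  | orE hct hcl1 hcl2 ih ih1 ih2 =>
      intro hc hw
      cases hc with
      | orE hl hll c c1 c2 =>
          have hmaj := ih c hw
          rw [hl] at hmaj
          simp only [PF.evalB, Bool.or_eq_true] at hmaj
          simp only [NJT.lab]
          rcases hmaj with ha | hb
          · exact ih1 c1 (fun φ hφ => by
              rcases hφ with rfl | hφ
              · exact ha
              · exact hw _ hφ)
          · have := ih2 c2 (fun φ hφ => by
              rcases hφ with rfl | hφ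
              · exact hb
              · exact hw _ hφ)
            rwa [hll] at this
  | @impI D a tt hct ih =>
      intro hc hw
      cases hc with
      | impI c =>
          show (PF.imp a tt.lab).evalB w = true
          simp only [PF.evalB, Bool.or_eq_true, Bool.not_eq_true']
          rcases Bool.eq_false_or_eq_true (a.evalB w) with ha | ha
          · exact Or.inr (ih c (fun φ hφ => by
              rcases hφ with rfl | hφ
              · exact ha
              · exact hw _ hφ))
          · exact Or.inl ha
  | impE h1 h2 ih1 ih2 =>
      intro hc hw
      cases hc with
      | impE e1 e2 c1 c2 =>
          have hmin := ih1 c1 hw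
          have hmaj := ih2 c2 hw
          rw [e1] at hmin
          rw [e2] at hmaj
          simp only [PF.evalB, hmin, Bool.not_true, Bool.false_or] at hmaj
          exact hmaj
section Construction

variable {n : ℕ} {adj : Fin n → Fin n → Bool} {Γ : Set (PF (Fin n × Fin n))}

lemma extractB (hα : alphaG n adj ∈ Γ) (i j v : Fin n) (hij : j ≠ i) :
    EDeriv Γ (.imp (X i v) (.imp (X j v) .bot)) (3 * n + 2) := by
  have h0 : EDeriv Γ (alphaG n adj) 0 := EDeriv.assum hα
  have hB : EDeriv Γ (formB n) 2 := h0.andE2.andE1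
  have h1 : EDeriv Γ (conjList ((List.finRange n).map fun i' =>
      conjList (((List.finRange n).filter fun j' => j' ≠ i').map fun j' =>
        PF.imp (X i' v) (.imp (X j' v) .bot)))) (2 + n) :=
    (conjExtract _ (List.mem_map.2 ⟨v, List.mem_finRange v, rfl⟩) hB).mono (by simp)
  have h2 : EDeriv Γ (conjList (((List.finRange n).filter fun j' => j' ≠ i).map fun j' =>
      PF.imp (X i v) (.imp (X j' v) .bot))) (2 + n + n) :=
    (conjExtract _ (List.mem_map.2 ⟨i, List.mem_finRange i, rfl⟩) h1).mono (by simp)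
  have hm : (PF.imp (X i v) (.imp (X j v) .bot)) ∈
      ((List.finRange n).filter fun j' => j' ≠ i).map fun j' =>
        PF.imp (X i v) (.imp (X j' v) .bot) :=
    List.mem_map.2 ⟨j, List.mem_filter.2 ⟨List.mem_finRange j, by simp [hij]⟩, rfl⟩
  refine (conjExtract _ hm h2).mono ?_
  have hle : (((List.finRange n).filter fun j' => j' ≠ i).map fun j' =>
      PF.imp (X i v) (.imp (X j' v) .bot)).length ≤ n := by
    rw [List.length_map]
    exact le_trans (List.length_filter_le _ _) (by simp)
  omega

lemma extractE (hα : alphaG n adj ∈ Γ) (i : ℕ) (hi : i + 1 < n) (v w : Fin n)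
    (hvw : adj v w = false) :
    EDeriv Γ (.imp (X ⟨i, by omega⟩ v) (.imp (X ⟨i + 1, hi⟩ w) .bot)) (3 * n + 4) := by
  have h0 : EDeriv Γ (alphaG n adj) 0 := EDeriv.assum hα
  have hE : EDeriv Γ (formE n adj) 4 := h0.andE2.andE2.andE2.andE2
  have h1 : EDeriv Γ (conjList (((List.finRange n).filter fun w' => ¬ adj v w').map fun w' =>
      conjList ((List.finRange (n - 1)).map fun i' =>
        PF.imp (X ⟨i'.val, by have := i'.isLt; omega⟩ v)
          (.imp (X ⟨i'.val + 1, by have := i'.isLt; omega⟩ w') .bot)))) (4 + n) :=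
    (conjExtract _ (List.mem_map.2 ⟨v, List.mem_finRange v, rfl⟩) hE).mono (by simp)
  have h2 : EDeriv Γ (conjList ((List.finRange (n - 1)).map fun i' =>
      PF.imp (X ⟨i'.val, by have := i'.isLt; omega⟩ v)
        (.imp (X ⟨i'.val + 1, by have := i'.isLt; omega⟩ w) .bot))) (4 + n + n) := by
    refine (conjExtract _ (List.mem_map.2 ⟨w, List.mem_filter.2
      ⟨List.mem_finRange w, by simp [hvw]⟩, rfl⟩) h1).mono ?_
    have hle : (((List.finRange n).filter fun w' => ¬ adj v w').map fun w' =>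
        conjList ((List.finRange (n - 1)).map fun i' =>
          PF.imp (X ⟨i'.val, by have := i'.isLt; omega⟩ v)
            (.imp (X ⟨i'.val + 1, by have := i'.isLt; omega⟩ w') .bot))).length ≤ n := by
      rw [List.length_map]
      exact le_trans (List.length_filter_le _ _) (by simp)
    omega
  have hm : (PF.imp (X ⟨i, by omega⟩ v) (.imp (X ⟨i + 1, hi⟩ w) .bot)) ∈
      (List.finRange (n - 1)).map fun i' =>
        PF.imp (X ⟨i'.val, by have := i'.isLt; omega⟩ v)
          (.imp (X ⟨i'.val + 1, by have := i'.isLt; omega⟩ w) .bot) :=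
    List.mem_map.2 ⟨⟨i, by omega⟩, List.mem_finRange _, rfl⟩
  refine (conjExtract _ hm h2).mono (by simp; omega)

lemma extractC (hα : alphaG n adj ∈ Γ) (m : Fin n) :
    EDeriv Γ (disjList ((List.finRange n).map fun v => X m v)) (3 + n) := by
  have h0 : EDeriv Γ (alphaG n adj) 0 := EDeriv.assum hα
  have hC : EDeriv Γ (formC n) 3 := h0.andE2.andE2.andE1
  exact (conjExtract _ (List.mem_map.2 ⟨m, List.mem_finRange m, rfl⟩) hC).mono (by simp)

lemma badCase (hα : alphaG n adj ∈ Γ) {l : List (Fin n)} (hlen : l.length ≤ n)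
    (hctx : ∀ (i : Fin n) (hi : (i : ℕ) < l.length), X i (l.get ⟨i, hi⟩) ∈ Γ)
    (hbad : ¬ l.Nodup ∨ ∃ i, ∃ h : i + 1 < l.length,
      adj (l.get ⟨i, by omega⟩) (l.get ⟨i + 1, h⟩) = false) :
    EDeriv Γ PF.bot (3 * n + 6) := by
  rcases hbad with hnd | ⟨i, h, hfalse⟩
  · rw [List.nodup_iff_injective_get] at hnd
    rw [Function.not_injective_iff] at hnd
    obtain ⟨i, j, hget, hne⟩ := hnd
    have hin : (i : ℕ) < n := lt_of_lt_of_le i.isLt hlen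
    have hjn : (j : ℕ) < n := lt_of_lt_of_le j.isLt hlen
    set iF : Fin n := ⟨i, hin⟩
    set jF : Fin n := ⟨j, hjn⟩
    have hij : jF ≠ iF := by
      simp only [iF, jF, ne_eq, Fin.mk.injEq]
      intro hc
      exact hne (Fin.ext hc.symm)
    set v : Fin n := l.get j
    have hXi : X iF v ∈ Γ := by
      have h1 := hctx iF i.isLt
      have : (⟨(iF : ℕ), i.isLt⟩ : Fin l.length) = i := Fin.ext rfl
      rw [this, hget] at h1
      exact h1
    have hXj : X jF v ∈ Γ := by
      have h1 := hctx jF j.isLt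
      have : (⟨(jF : ℕ), j.isLt⟩ : Fin l.length) = j := Fin.ext rfl
      rw [this] at h1
      exact h1
    have D := extractB hα iF jF v hij
    have s1 := (EDeriv.assum hXi).impE D
    have s2 := (EDeriv.assum hXj).impE s1
    exact s2.mono (by omega)
  · have hin : i + 1 < n := lt_of_lt_of_le h hlen
    set v : Fin n := l.get ⟨i, by omega⟩
    set w : Fin n := l.get ⟨i + 1, h⟩
    have D := extractE hα i hin v w hfalse
    have hXi : X (⟨i, by omega⟩ : Fin n) v ∈ Γ := hctx ⟨i, by omega⟩ (by simpa using (by omega : i < l.length))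
    have hXj : X (⟨i + 1, hin⟩ : Fin n) w ∈ Γ := hctx ⟨i + 1, hin⟩ (by simpa using h)
    have s1 := (EDeriv.assum hXi).impE D
    have s2 := (EDeriv.assum hXj).impE s1
    exact s2.mono (by omega)

lemma mainClaim (hno : ¬ HamPath n adj) (hn : 2 ≤ n) :
    ∀ (k : ℕ) (l : List (Fin n)), l.length + k = n →
    ∀ Γ : Set (PF (Fin n × Fin n)), alphaG n adj ∈ Γ →
    (∀ (i : Fin n) (hi : (i : ℕ) < l.length), X i (l.get ⟨i, hi⟩) ∈ Γ) →
    EDeriv Γ PF.bot ((k + 1) * (4 * n + 8)) := by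
  intro k
  induction k with
  | zero =>
      intro l hlen Γ hα hctx
      by_cases hbad : ¬ l.Nodup ∨ ∃ i, ∃ h : i + 1 < l.length,
          adj (l.get ⟨i, by omega⟩) (l.get ⟨i + 1, h⟩) = false
      · exact (badCase hα (by omega) hctx hbad).mono (by nlinarith)
      · push_neg at hbad
        obtain ⟨hnd, hedge⟩ := hbad
        exfalso
        apply hno
        refine ⟨fun i => l.get ⟨i.val, by omega⟩, ?_, ?_⟩
        · rw [Finite.injective_iff_bijective.symm]
          intro a b hab
          have := List.nodup_iff_injective_get.mp hnd hab
          have h2 : (a : ℕ) = b := by simpa [Fin.ext_iff] using this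
          exact Fin.ext h2
        · intro i hi1
          have he := hedge i (by omega)
          rw [Bool.ne_false_iff] at he
          exact he
  | succ k ih =>
      intro l hlen Γ hα hctx
      have hlt : l.length < n := by omega
      set mF : Fin n := ⟨l.length, hlt⟩
      have hC := extractC hα mF
      have hcases : ∀ x ∈ (List.finRange n).map fun u => X mF u,
          ∀ Γ' : Set (PF (Fin n × Fin n)), Γ ⊆ Γ' → x ∈ Γ' →
            EDeriv Γ' PF.bot ((k + 1) * (4 * n + 8)) := by
        rintro x hx Γ' hΓ hxΓ
        obtain ⟨u, -, rfl⟩ := List.mem_map.1 hx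
        refine ih (l ++ [u]) (by simp; omega) Γ' (hΓ hα) ?_
        intro i hi
        simp only [List.length_append, List.length_singleton] at hi
        by_cases hi' : (i : ℕ) < l.length
        · have hg : (l ++ [u]).get ⟨i, by simp; omega⟩ = l.get ⟨i, hi'⟩ := by
            simp [List.get_eq_getElem, List.getElem_append, hi']
          rw [hg]
          exact hΓ (hctx i hi')
        · have hieq : (i : ℕ) = l.length := by omega
          have hg : (l ++ [u]).get ⟨i, by simp; omega⟩ = u := by
            simp [List.get_eq_getElem, List.getElem_append, hieq]
          rw [hg]
          have : i = mF := Fin.ext hieq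
          rw [this]
          exact hxΓ
      have hres := cascadeTop _ (by simp; omega) hC hcases
      refine hres.mono ?_
      simp only [List.length_map, List.length_finRange]
      have h1 : 3 + n ≤ (k + 1) * (4 * n + 8) + n := by nlinarith
      rw [max_eq_right h1]
      ring_nf
      nlinarith

end Construction
end HamNJ
/-- There is a polynomial `p` such that for every simple directed graph `G` with
`n > 0` vertices: `G` has no Hamiltonian path if and only if there exists a normal
tree-like NJ proof of `α_G → ⊥` whose height is at most `p(n)`. -/
theorem no_hamPath_iff_short_normal_NJ_proof :
    ∃ p : Polynomial ℕ, ∀ (n : ℕ), 0 < n → ∀ adj : Fin n → Fin n → Bool,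
      (¬ HamPath n adj ↔
        ∃ t : NJT (Fin n × Fin n), t.Correct ∧ t.Normal ∧ t.ClosedUnder ∅ ∧
          t.lab = PF.neg (alphaG n adj) ∧ t.height ≤ p.eval n) := by
  classical
  refine ⟨4 * Polynomial.X ^ 2 + 12 * Polynomial.X + 9, ?_⟩
  intro n hn adj
  have hev : (4 * Polynomial.X ^ 2 + 12 * Polynomial.X + 9 : Polynomial ℕ).eval n
      = 4 * n ^ 2 + 12 * n + 9 := by simp
  rw [hev]
  constructor
  · intro hno
    have hn2 : 2 ≤ n := by
      rcases Nat.lt_or_ge n 2 with h | h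
      · exfalso
        apply hno
        refine ⟨fun i => i, Function.bijective_id, ?_⟩
        intro i hi
        exact absurd hi (by omega)
      · exact h
    have hmain := HamNJ.mainClaim hno hn2 n [] (by simp) (insert (alphaG n adj) ∅)
      (Set.mem_insert _ _) (by intro i hi; simp at hi)
    obtain ⟨t, h1, h2, h3, h4, h5, h6⟩ := hmain
    refine ⟨.impI (alphaG n adj) t, .impI h1, .impI h2, .impI h3, ?_, ?_⟩
    · simp [NJT.lab, h5, PF.neg]
    · show t.height + 1 ≤ _
      have hb : (n + 1) * (4 * n + 8) = 4 * n ^ 2 + 12 * n + 8 := by ring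
      omega
  · rintro ⟨t, hcor, -, hclosed, hlab, -⟩ hham
    obtain ⟨w, hw⟩ := HamNJ.sat_of_hamPath hham
    have hs := HamNJ.sound (w := w) hclosed hcor
      (by intro φ hφ; exact absurd hφ (Set.notMem_empty _))
    rw [hlab] at hs
    simp only [PF.neg, PF.evalB, Bool.or_false, Bool.not_eq_true'] at hs
    simp only [alphaG, PF.evalB, Bool.and_eq_true] at hw
    simp [alphaG, PF.evalB, hw.1, hw.2.1, hw.2.2.1, hw.2.2.2.1, hw.2.2.2.2] at hs
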